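/- If f : [a,b] ⊆ (0,∞) → ℝ is symmetrized p-convex (p ≠ 0) and w : [a,b] → [0,∞) is integrable and p-symmetric with respect to ((a^p + b^p)/2)^(1/p), i.e. w(x) = w((a^p + b^p - x^p)^(1/p)) for all x ∈ [a,b], then f(((a^p + b^p)/2)^(1/p)) · ∫_a^b w(x)·x^(p-1) dx ≤ ∫_a^b w(x)·f(x)·x^(p-1) dx ≤ ((f(a) + f(b))/2) · ∫_a^b w(x)·x^(p-1) dx. -/

import Mathlib

noncomputable section
open Real Set MeasureTheory intervalIntegral

lemma aux_pow_mem {p a b x : ℝ} (hp : p ≠ 0) (ha : 0 < a) (h1 : a ≤ x) (h2 : x ≤ b) :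
    min (a^p) (b^p) ≤ x^p ∧ x^p ≤ max (a^p) (b^p) := by
  rcases hp.lt_or_gt with hneg | hpos
  · exact ⟨le_trans (min_le_right _ _) (Real.rpow_le_rpow_of_nonpos (ha.trans_le h1) h2 hneg.le),
      le_trans (Real.rpow_le_rpow_of_nonpos ha h1 hneg.le) (le_max_left _ _)⟩
  · exact ⟨le_trans (min_le_left _ _) (Real.rpow_le_rpow ha.le h1 hpos.le),
      le_trans (Real.rpow_le_rpow (ha.trans_le h1).le h2 hpos.le) (le_max_right _ _)⟩

lemma aux_pow_mem_strict {p a b x : ℝ} (hp : p ≠ 0) (ha : 0 < a) (h1 : a < x) (h2 : x < b) :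
    min (a^p) (b^p) < x^p ∧ x^p < max (a^p) (b^p) := by
  rcases hp.lt_or_gt with hneg | hpos
  · exact ⟨lt_of_le_of_lt (min_le_right _ _) (Real.rpow_lt_rpow_of_neg (ha.trans h1) h2 hneg),
      lt_of_lt_of_le (Real.rpow_lt_rpow_of_neg ha h1 hneg) (le_max_left _ _)⟩
  · exact ⟨lt_of_le_of_lt (min_le_left _ _) (Real.rpow_lt_rpow ha.le h1 hpos),
      lt_of_lt_of_le (Real.rpow_lt_rpow (ha.trans h1).le h2 hpos) (le_max_right _ _)⟩

lemma aux_rpow_inv_mem {p a b u : ℝ} (hp : p ≠ 0) (ha : 0 < a) (hab : a ≤ b)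
    (h1 : min (a^p) (b^p) ≤ u) (h2 : u ≤ max (a^p) (b^p)) :
    a ≤ u^(1/p) ∧ u^(1/p) ≤ b := by
  have hb : 0 < b := ha.trans_le hab
  have hap : (0:ℝ) < a^p := Real.rpow_pos_of_pos ha p
  have hbp : (0:ℝ) < b^p := Real.rpow_pos_of_pos hb p
  have hu : 0 < u := lt_of_lt_of_le (lt_min hap hbp) h1
  rw [one_div]
  rcases hp.lt_or_gt with hneg | hpos
  · have hle : b^p ≤ a^p := Real.rpow_le_rpow_of_nonpos ha hab hneg.le
    rw [min_eq_right hle] at h1; rw [max_eq_left hle] at h2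
    constructor
    · calc a = (a^p)^p⁻¹ := (Real.rpow_rpow_inv ha.le hp).symm
        _ ≤ u^p⁻¹ := Real.rpow_le_rpow_of_nonpos hu h2 (by simpa using inv_nonpos.mpr hneg.le)
    · calc u^p⁻¹ ≤ (b^p)^p⁻¹ :=
          Real.rpow_le_rpow_of_nonpos hbp h1 (inv_nonpos.mpr hneg.le)
        _ = b := Real.rpow_rpow_inv hb.le hp
  · have hle : a^p ≤ b^p := Real.rpow_le_rpow ha.le hab hpos.le
    rw [min_eq_left hle] at h1; rw [max_eq_right hle] at h2
    constructor
    · calc a = (a^p)^p⁻¹ := (Real.rpow_rpow_inv ha.le hp).symm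
        _ ≤ u^p⁻¹ := Real.rpow_le_rpow hap.le h1 (by positivity)
    · calc u^p⁻¹ ≤ (b^p)^p⁻¹ := Real.rpow_le_rpow hu.le h2 (by positivity)
        _ = b := Real.rpow_rpow_inv hb.le hp

lemma aux_rpow_inv_mem_strict {p a b u : ℝ} (hp : p ≠ 0) (ha : 0 < a) (hab : a < b)
    (h1 : min (a^p) (b^p) < u) (h2 : u < max (a^p) (b^p)) :
    a < u^(1/p) ∧ u^(1/p) < b := by
  have hb : 0 < b := ha.trans hab
  have hap : (0:ℝ) < a^p := Real.rpow_pos_of_pos ha p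
  have hbp : (0:ℝ) < b^p := Real.rpow_pos_of_pos hb p
  have hu : 0 < u := lt_of_lt_of_le (lt_min hap hbp) h1.le
  rw [one_div]
  rcases hp.lt_or_gt with hneg | hpos
  · have hle : b^p < a^p := Real.rpow_lt_rpow_of_neg ha hab hneg
    rw [min_eq_right hle.le] at h1; rw [max_eq_left hle.le] at h2
    have hip : p⁻¹ < 0 := inv_neg''.mpr hneg
    constructor
    · calc a = (a^p)^p⁻¹ := (Real.rpow_rpow_inv ha.le hp).symm
        _ < u^p⁻¹ := Real.rpow_lt_rpow_of_neg hu h2 hip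
    · calc u^p⁻¹ < (b^p)^p⁻¹ := Real.rpow_lt_rpow_of_neg hbp h1 hip
        _ = b := Real.rpow_rpow_inv hb.le hp
  · have hle : a^p < b^p := Real.rpow_lt_rpow ha.le hab hpos
    rw [min_eq_left hle.le] at h1; rw [max_eq_right hle.le] at h2
    constructor
    · calc a = (a^p)^p⁻¹ := (Real.rpow_rpow_inv ha.le hp).symm
        _ < u^p⁻¹ := Real.rpow_lt_rpow hap.le h1 (by positivity)
    · calc u^p⁻¹ < (b^p)^p⁻¹ := Real.rpow_lt_rpow hu.le h2 (by positivity)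
        _ = b := Real.rpow_rpow_inv hb.le hp

/-- `f` is p-convex on `[a,b]`. -/
def PConvexOn (p a b : ℝ) (f : ℝ → ℝ) : Prop :=
  ∀ x ∈ Set.Icc a b, ∀ y ∈ Set.Icc a b, ∀ t ∈ Set.Icc (0:ℝ) 1,
    f ((t * x ^ p + (1 - t) * y ^ p) ^ (1/p)) ≤ t * f x + (1 - t) * f y

/-- The p-symmetrical transform of `f` on `[a,b]`. -/
def PSym (p a b : ℝ) (f : ℝ → ℝ) : ℝ → ℝ :=
  fun x => (f x + f ((a ^ p + b ^ p - x ^ p) ^ (1/p))) / 2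

theorem fejer_symmetrized_pconvex (p a b : ℝ) (hp : p ≠ 0) (ha : 0 < a) (hab : a < b)
    (f w : ℝ → ℝ) (hf : PConvexOn p a b (PSym p a b f))
    (hw : ∀ x ∈ Set.Icc a b, 0 ≤ w x)
    (hsym : ∀ x ∈ Set.Icc a b, w x = w ((a ^ p + b ^ p - x ^ p) ^ (1/p)))
    (hw_int : IntervalIntegrable (fun x => w x * x ^ (p - 1)) volume a b)
    (hwf_int : IntervalIntegrable (fun x => w x * f x * x ^ (p - 1)) volume a b) :
    f (((a ^ p + b ^ p) / 2) ^ (1/p)) * ∫ x in a..b, w x * x ^ (p - 1) ≤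
        (∫ x in a..b, w x * f x * x ^ (p - 1)) ∧
    (∫ x in a..b, w x * f x * x ^ (p - 1)) ≤
        ((f a + f b) / 2) * ∫ x in a..b, w x * x ^ (p - 1) := by
  have hb : 0 < b := ha.trans hab
  simp only [PConvexOn, PSym] at hf
  set φ : ℝ → ℝ := fun x => (a ^ p + b ^ p - x ^ p) ^ (1/p) with hφdef
  have hE : ∀ x : ℝ, (a ^ p + b ^ p - x ^ p) ^ (1/p) = φ x := fun _ => rfl
  simp only [hE] at hf hsym
  set g : ℝ → ℝ := fun x => (f x + f (φ x)) / 2 with hgdef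
  have hgE : ∀ x : ℝ, (f x + f (φ x)) / 2 = g x := fun _ => rfl
  simp only [hgE] at hf
  set m : ℝ := ((a ^ p + b ^ p) / 2) ^ (1/p) with hm
  have hap : (0:ℝ) < a ^ p := Real.rpow_pos_of_pos ha p
  have hbp : (0:ℝ) < b ^ p := Real.rpow_pos_of_pos hb p
  have hsum_minmax : min (a^p) (b^p) + max (a^p) (b^p) = a ^ p + b ^ p := by
    rcases le_total (a^p) (b^p) with h | h
    · rw [min_eq_left h, max_eq_right h]
    · rw [min_eq_right h, max_eq_left h]; exact add_comm _ _
  have hpos_sub : ∀ x ∈ Icc a b, 0 < a ^ p + b ^ p - x ^ p := by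
    intro x hx
    obtain ⟨l, r⟩ := aux_pow_mem hp ha hx.1 hx.2
    have := lt_min hap hbp
    linarith
  have hFicc : ∀ x ∈ Icc a b, φ x ∈ Icc a b := by
    intro x hx
    obtain ⟨l, r⟩ := aux_pow_mem hp ha hx.1 hx.2
    obtain ⟨l2, r2⟩ := aux_rpow_inv_mem hp ha hab.le (u := a^p + b^p - x^p)
      (by linarith) (by linarith)
    exact ⟨l2, r2⟩
  have hFioo : ∀ x ∈ Ioo a b, φ x ∈ Ioo a b := by
    intro x hx
    obtain ⟨l, r⟩ := aux_pow_mem_strict hp ha hx.1 hx.2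
    obtain ⟨l2, r2⟩ := aux_rpow_inv_mem_strict hp ha hab (u := a^p + b^p - x^p)
      (by linarith) (by linarith)
    exact ⟨l2, r2⟩
  have hφp : ∀ x ∈ Icc a b, (φ x) ^ p = a ^ p + b ^ p - x ^ p := by
    intro x hx
    show ((a ^ p + b ^ p - x ^ p) ^ (1/p)) ^ p = _
    rw [one_div]
    exact Real.rpow_inv_rpow (hpos_sub x hx).le hp
  have hinvol : ∀ x ∈ Icc a b, φ (φ x) = x := by
    intro x hx
    have h0 : (0:ℝ) ≤ x := le_trans ha.le hx.1
    have h1 : a ^ p + b ^ p - (φ x) ^ p = x ^ p := by rw [hφp x hx]; ring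
    calc φ (φ x) = (a ^ p + b ^ p - (φ x) ^ p) ^ (1/p) := rfl
      _ = (x ^ p) ^ (1/p) := by rw [h1]
      _ = x := by rw [one_div]; exact Real.rpow_rpow_inv h0 hp
  have hφa : φ a = b := by
    have h1 : a ^ p + b ^ p - a ^ p = b ^ p := by ring
    calc φ a = (a ^ p + b ^ p - a ^ p) ^ (1/p) := rfl
      _ = (b ^ p) ^ (1/p) := by rw [h1]
      _ = b := by rw [one_div]; exact Real.rpow_rpow_inv hb.le hp
  have hφb : φ b = a := by
    have h1 : a ^ p + b ^ p - b ^ p = a ^ p := by ring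
    calc φ b = (a ^ p + b ^ p - b ^ p) ^ (1/p) := rfl
      _ = (a ^ p) ^ (1/p) := by rw [h1]
      _ = a := by rw [one_div]; exact Real.rpow_rpow_inv ha.le hp
  have hc2 : (0:ℝ) < (a ^ p + b ^ p) / 2 := by linarith
  have hmp : m ^ p = (a ^ p + b ^ p) / 2 := by
    rw [hm, one_div]; exact Real.rpow_inv_rpow hc2.le hp
  have hmIcc : m ∈ Icc a b := by
    have h1 : min (a^p) (b^p) ≤ max (a^p) (b^p) := min_le_max
    obtain ⟨l2, r2⟩ := aux_rpow_inv_mem hp ha hab.le (u := (a^p + b^p)/2)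
      (by linarith) (by linarith)
    exact ⟨l2, r2⟩
  have hφm : φ m = m := by
    have h1 : a ^ p + b ^ p - m ^ p = (a ^ p + b ^ p) / 2 := by rw [hmp]; ring
    calc φ m = (a ^ p + b ^ p - m ^ p) ^ (1/p) := rfl
      _ = ((a ^ p + b ^ p) / 2) ^ (1/p) := by rw [h1]
      _ = m := hm.symm
  have hgm : g m = f m := by
    show (f m + f (φ m)) / 2 = f m
    rw [hφm]; ring
  have hga : g a = (f a + f b) / 2 := by
    show (f a + f (φ a)) / 2 = _
    rw [hφa]
  have hgb : g b = (f a + f b) / 2 := by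
    show (f b + f (φ b)) / 2 = _
    rw [hφb]; ring
  have hgsym : ∀ x ∈ Icc a b, g (φ x) = g x := by
    intro x hx
    show (f (φ x) + f (φ (φ x))) / 2 = (f x + f (φ x)) / 2
    rw [hinvol x hx]; ring
  -- pointwise lower bound
  have hlow : ∀ x ∈ Icc a b, f m ≤ g x := by
    intro x hx
    have key := hf x hx (φ x) (hFicc x hx) (1/2) (by norm_num)
    have h1 : 1/2 * x ^ p + (1 - 1/2) * (φ x) ^ p = (a ^ p + b ^ p) / 2 := by
      rw [hφp x hx]; ring
    have harg : (1/2 * x ^ p + (1 - 1/2) * (φ x) ^ p) ^ (1/p) = m := by rw [h1, hm]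
    rw [harg, hgsym x hx] at key
    linarith [hgm.ge, key]
  -- pointwise upper bound
  have hup : ∀ x ∈ Icc a b, g x ≤ (f a + f b) / 2 := by
    intro x hx
    have hba : b ^ p - a ^ p ≠ 0 := by
      rcases hp.lt_or_gt with hneg | hpos
      · have := Real.rpow_lt_rpow_of_neg ha hab hneg
        intro h; linarith [sub_eq_zero.mp h]
      · have := Real.rpow_lt_rpow ha.le hab hpos
        intro h; linarith [sub_eq_zero.mp h]
    set t : ℝ := (b ^ p - x ^ p) / (b ^ p - a ^ p) with hT
    have ht : t ∈ Icc (0:ℝ) 1 := by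
      rcases hp.lt_or_gt with hneg | hpos
      · have h1 : b ^ p < a ^ p := Real.rpow_lt_rpow_of_neg ha hab hneg
        have h2 : b ^ p ≤ x ^ p :=
          Real.rpow_le_rpow_of_nonpos (lt_of_lt_of_le ha hx.1) hx.2 hneg.le
        have h3 : x ^ p ≤ a ^ p := Real.rpow_le_rpow_of_nonpos ha hx.1 hneg.le
        have ht' : t = (x ^ p - b ^ p) / (a ^ p - b ^ p) := by
          rw [hT, div_eq_div_iff hba (by intro h; exact hba (by linarith [sub_eq_zero.mp h]))]
          ring
        rw [ht']
        constructor
        · exact div_nonneg (by linarith) (by linarith)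
        · exact (div_le_one (by linarith)).mpr (by linarith)
      · have h1 : a ^ p < b ^ p := Real.rpow_lt_rpow ha.le hab hpos
        have h2 : a ^ p ≤ x ^ p := Real.rpow_le_rpow ha.le hx.1 hpos.le
        have h3 : x ^ p ≤ b ^ p :=
          Real.rpow_le_rpow (lt_of_lt_of_le ha hx.1).le hx.2 hpos.le
        constructor
        · exact div_nonneg (by linarith) (by linarith)
        · exact (div_le_one (by linarith)).mpr (by linarith)
    have hx0 : (0:ℝ) < x := lt_of_lt_of_le ha hx.1
    have key := hf a ⟨le_refl a, hab.le⟩ b ⟨hab.le, le_refl b⟩ t ht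
    have harg : t * a ^ p + (1 - t) * b ^ p = x ^ p := by
      rw [hT]; field_simp; ring
    rw [harg] at key
    have hxx : (x ^ p) ^ (1/p) = x := by
      rw [one_div]; exact Real.rpow_rpow_inv hx0.le hp
    rw [hxx, hga, hgb] at key
    have : t * ((f a + f b) / 2) + (1 - t) * ((f a + f b) / 2) = (f a + f b) / 2 := by ring
    linarith
  -- set up change of variables
  have hIccIoo : Ioo a b ⊆ Icc a b := Ioo_subset_Icc_self
  set D : ℝ → ℝ := fun x => -((a ^ p + b ^ p - x ^ p) ^ (1/p - 1) * x ^ (p - 1)) with hD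
  have hderiv : ∀ x ∈ Ioo a b, HasDerivWithinAt φ (D x) (Ioo a b) x := by
    intro x hx
    have hx0 : (0:ℝ) < x := ha.trans hx.1
    have hcs : 0 < a ^ p + b ^ p - x ^ p := hpos_sub x (hIccIoo hx)
    have h1 : HasDerivAt (fun y : ℝ => y ^ p) (p * x ^ (p - 1)) x :=
      Real.hasDerivAt_rpow_const (Or.inl hx0.ne')
    have h2 : HasDerivAt (fun y : ℝ => a ^ p + b ^ p - y ^ p) (-(p * x ^ (p - 1))) x := by
      exact ((hasDerivAt_const x (a ^ p + b ^ p)).sub h1).congr_deriv (by ring)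
    have h3 : HasDerivAt (fun u : ℝ => u ^ (1/p))
        (1/p * (a ^ p + b ^ p - x ^ p) ^ (1/p - 1)) (a ^ p + b ^ p - x ^ p) :=
      Real.hasDerivAt_rpow_const (Or.inl hcs.ne')
    have h4 := h3.comp x h2
    have h5 : 1/p * (a ^ p + b ^ p - x ^ p) ^ (1/p - 1) * (-(p * x ^ (p - 1))) = D x := by
      simp only [hD]; field_simp
    rw [h5] at h4
    rw [hφdef]
    exact h4.hasDerivWithinAt
  have hinjOn : InjOn φ (Ioo a b) := by
    intro x hx y hy h
    rw [← hinvol x (hIccIoo hx), ← hinvol y (hIccIoo hy), h]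
  have himg : φ '' (Ioo a b) = Ioo a b := by
    apply Subset.antisymm
    · rintro _ ⟨x, hx, rfl⟩; exact hFioo x hx
    · intro y hy; exact ⟨φ y, hFioo y hy, hinvol y (hIccIoo hy)⟩
  have hmeas : MeasurableSet (Ioo a b) := measurableSet_Ioo
  have hG : IntegrableOn (fun u => w u * f u * u ^ (p - 1)) (Ioo a b) volume := by
    have := (intervalIntegrable_iff_integrableOn_Ioc_of_le hab.le).mp hwf_int
    exact this.mono_set Ioo_subset_Ioc_self
  have hW : IntegrableOn (fun u => w u * u ^ (p - 1)) (Ioo a b) volume := by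
    have := (intervalIntegrable_iff_integrableOn_Ioc_of_le hab.le).mp hw_int
    exact this.mono_set Ioo_subset_Ioc_self
  have hDabs : ∀ x ∈ Ioo a b,
      |D x| • (w (φ x) * f (φ x) * (φ x) ^ (p - 1)) = w x * f (φ x) * x ^ (p - 1) := by
    intro x hx
    have hx0 : (0:ℝ) < x := ha.trans hx.1
    have hcs : 0 < a ^ p + b ^ p - x ^ p := hpos_sub x (hIccIoo hx)
    have habs : |D x| = (a ^ p + b ^ p - x ^ p) ^ (1/p - 1) * x ^ (p - 1) := by
      simp only [hD, abs_neg]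
      exact abs_of_nonneg (mul_nonneg (Real.rpow_nonneg hcs.le _) (Real.rpow_nonneg hx0.le _))
    have e1 : (φ x) ^ (p - 1) = (a ^ p + b ^ p - x ^ p) ^ (1/p * (p - 1)) := by
      show ((a ^ p + b ^ p - x ^ p) ^ (1/p)) ^ (p - 1) = _
      rw [← Real.rpow_mul hcs.le]
    have e3 : 1/p - 1 + 1/p * (p - 1) = 0 := by field_simp; ring
    have hwx : w (φ x) = w x := (hsym x (hIccIoo hx)).symm
    rw [smul_eq_mul, habs, e1, hwx]
    calc (a ^ p + b ^ p - x ^ p) ^ (1/p - 1) * x ^ (p - 1) *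
          (w x * f (φ x) * (a ^ p + b ^ p - x ^ p) ^ (1/p * (p - 1)))
        = ((a ^ p + b ^ p - x ^ p) ^ (1/p - 1) * (a ^ p + b ^ p - x ^ p) ^ (1/p * (p - 1))) *
          (x ^ (p - 1) * (w x * f (φ x))) := by ring
      _ = w x * f (φ x) * x ^ (p - 1) := by
          rw [← Real.rpow_add hcs, e3, Real.rpow_zero, one_mul]; ring
  have hCOV : ∫ u in Ioo a b, w u * f u * u ^ (p - 1)
      = ∫ x in Ioo a b, w x * f (φ x) * x ^ (p - 1) := by
    have h0 := MeasureTheory.integral_image_eq_integral_abs_deriv_smul hmeas hderiv hinjOn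
      (fun u => w u * f u * u ^ (p - 1))
    rw [himg] at h0
    rw [h0]
    apply MeasureTheory.setIntegral_congr_fun hmeas
    intro x hx
    exact hDabs x hx
  have hCOVint : IntegrableOn (fun x => w x * f (φ x) * x ^ (p - 1)) (Ioo a b) volume := by
    have h0 := (MeasureTheory.integrableOn_image_iff_integrableOn_abs_deriv_smul hmeas hderiv
      hinjOn (fun u => w u * f u * u ^ (p - 1))).mp (by rw [himg]; exact hG)
    exact h0.congr_fun hDabs hmeas
  have hgfun : (fun x => w x * g x * x ^ (p - 1))
      = fun x => (w x * f x * x ^ (p - 1) + w x * f (φ x) * x ^ (p - 1)) / 2 := by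
    funext x
    show w x * ((f x + f (φ x)) / 2) * x ^ (p - 1) = _
    ring
  have hGg : IntegrableOn (fun x => w x * g x * x ^ (p - 1)) (Ioo a b) volume := by
    rw [hgfun]
    exact (hG.add hCOVint).div_const 2
  have hIg : ∫ x in Ioo a b, w x * g x * x ^ (p - 1)
      = ∫ x in Ioo a b, w x * f x * x ^ (p - 1) := by
    rw [hgfun, MeasureTheory.integral_div, MeasureTheory.integral_add hG hCOVint, ← hCOV]
    ring
  have hconv : ∀ h : ℝ → ℝ, ∫ x in a..b, h x = ∫ x in Ioo a b, h x := by
    intro h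
    rw [intervalIntegral.integral_of_le hab.le, MeasureTheory.integral_Ioc_eq_integral_Ioo]
  constructor
  · rw [hconv (fun x => w x * x ^ (p - 1)), hconv (fun x => w x * f x * x ^ (p - 1)),
      ← hIg, ← MeasureTheory.integral_const_mul]
    apply MeasureTheory.setIntegral_mono_on (hW.const_mul (f m)) hGg hmeas
    intro x hx
    have hgx := hlow x (hIccIoo hx)
    have hw0 := hw x (hIccIoo hx)
    have hxp : (0:ℝ) ≤ x ^ (p - 1) := Real.rpow_nonneg (ha.trans hx.1).le _
    nlinarith [mul_le_mul_of_nonneg_left hgx (mul_nonneg hw0 hxp)]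
  · rw [hconv (fun x => w x * x ^ (p - 1)), hconv (fun x => w x * f x * x ^ (p - 1)),
      ← hIg, ← MeasureTheory.integral_const_mul]
    apply MeasureTheory.setIntegral_mono_on hGg (hW.const_mul ((f a + f b) / 2)) hmeas
    intro x hx
    have hgx := hup x (hIccIoo hx)
    have hw0 := hw x (hIccIoo hx)
    have hxp : (0:ℝ) ≤ x ^ (p - 1) := Real.rpow_nonneg (ha.trans hx.1).le _
    nlinarith [mul_le_mul_of_nonneg_left hgx (mul_nonneg hw0 hxp)]
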